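/- arXiv:1102.2878 — 2 statements merged into one kernel-verified Lean document; each statement's English description precedes it below -/
import Mathlib

section
/- Let D ≥ 1, let α ∈ ℕᴰ be a multi-index, and let t, t₀ ∈ ℝᴰ. Then the multivariate Hermite function has the everywhere-convergent Taylor expansion h_α(t) = Σ_{β ∈ ℕᴰ} ((t − t₀)^β / β!) (−1)^{|β|} h_{α+β}(t₀), where the multi-index family is summable. -/
open Finset

/-- The `n`-th Hermite function: `hₙ(t) = (−1)ⁿ (dⁿ/dtⁿ) e^{−t²}`. -/
noncomputable def hermiteFun (n : ℕ) (t : ℝ) : ℝ :=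
  (-1 : ℝ) ^ n * iteratedDeriv n (fun x => Real.exp (-x ^ 2)) t

/-- Multivariate Hermite function `h_α(x) = ∏_{d} h_{α[d]}(x[d])`. -/
noncomputable def hermiteFunMulti {D : ℕ} (α : Fin D → ℕ) (x : Fin D → ℝ) : ℝ :=
  ∏ d, hermiteFun (α d) (x d)

/-- Multi-index factorial `β! = ∏_d (β[d])!`. -/
def mFactorial {D : ℕ} (β : Fin D → ℕ) : ℕ := ∏ d, Nat.factorial (β d)

/-- Multi-index power `x^β = ∏_d (x[d])^{β[d]}`. -/
def mPow {D : ℕ} (x : Fin D → ℝ) (β : Fin D → ℕ) : ℝ := ∏ d, (x d) ^ (β d)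

/-- Multi-index degree `|β| = Σ_d β[d]`. -/
def mDeg {D : ℕ} (β : Fin D → ℕ) : ℕ := ∑ d, β d


noncomputable def Fc : ℂ → ℂ := fun z => Complex.exp (-z ^ 2)

lemma Fc_contDiff : ContDiff ℂ ⊤ Fc :=
  Complex.contDiff_exp.comp (((contDiff_id.pow 2).neg))

lemma Fc_diff_iter (n : ℕ) : Differentiable ℂ (iteratedDeriv n Fc) :=
  Fc_contDiff.differentiable_iteratedDeriv n (by exact_mod_cast WithTop.coe_lt_top _)

lemma iter_iter (n k : ℕ) : iteratedDeriv k (iteratedDeriv n Fc) = iteratedDeriv (n + k) Fc := by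
  simp only [iteratedDeriv_eq_iterate, ← Function.iterate_add_apply, Nat.add_comm]

lemma realIter (n : ℕ) (x : ℝ) :
    iteratedDeriv n (fun x : ℝ => Real.exp (-x ^ 2)) x = (iteratedDeriv n Fc (x : ℂ)).re := by
  induction n generalizing x with
  | zero =>
    simp only [iteratedDeriv_zero, Fc]
    rw [show (-(x:ℂ)^2) = ((-x^2 : ℝ) : ℂ) by push_cast; ring, ← Complex.ofReal_exp,
      Complex.ofReal_re]
  | succ n ih =>
    rw [iteratedDeriv_succ, iteratedDeriv_succ]
    have h1 : HasDerivAt (iteratedDeriv n Fc) (deriv (iteratedDeriv n Fc) (x : ℂ)) (x : ℂ) :=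
      ((Fc_diff_iter n) (x : ℂ)).hasDerivAt
    have h2 := h1.real_of_complex
    rw [funext ih]
    exact h2.deriv

lemma g_taylor (n : ℕ) (t t₀ : ℝ) :
    HasSum (fun k : ℕ => (t - t₀) ^ k / (Nat.factorial k : ℝ) *
        iteratedDeriv (n + k) (fun x : ℝ => Real.exp (-x ^ 2)) t₀)
      (iteratedDeriv n (fun x : ℝ => Real.exp (-x ^ 2)) t) := by
  have H := Complex.hasSum_taylorSeries_of_entire (Fc_diff_iter n) (t₀ : ℂ) (t : ℂ)
  have H2 := H.mapL Complex.reCLM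
  simp only [iter_iter, Complex.reCLM_apply] at H2
  rw [realIter]
  refine H2.congr_fun fun k => ?_
  rw [realIter]
  have : ((Nat.factorial k : ℂ)⁻¹ • ((t : ℂ) - (t₀ : ℂ)) ^ k • iteratedDeriv (n + k) Fc (t₀ : ℂ)) =
      (((t - t₀) ^ k / (Nat.factorial k : ℝ) : ℝ) : ℂ) * iteratedDeriv (n + k) Fc (t₀ : ℂ) := by
    push_cast
    rw [smul_eq_mul, smul_eq_mul]
    ring
  rw [this, Complex.re_ofReal_mul]

lemma hermite_taylor (n : ℕ) (t t₀ : ℝ) :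
    HasSum (fun k : ℕ => (t - t₀) ^ k / (Nat.factorial k : ℝ) * (-1 : ℝ) ^ k * hermiteFun (n + k) t₀)
      (hermiteFun n t) := by
  have H := (g_taylor n t t₀).mul_left ((-1 : ℝ) ^ n)
  refine H.congr_fun fun k => ?_
  simp only [hermiteFun]
  have hk : (-1 : ℝ) ^ k * (-1) ^ (n + k) = (-1) ^ n := by
    rw [← pow_add, show k + (n + k) = n + 2 * k by ring, pow_add, pow_mul, neg_one_sq,
      one_pow, mul_one]
  linear_combination ((t - t₀) ^ k / (Nat.factorial k : ℝ) *
    iteratedDeriv (n + k) (fun x => Real.exp (-x ^ 2)) t₀) * hk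

lemma hermite_taylor_summable_norm (n : ℕ) (t t₀ : ℝ) :
    Summable (fun k : ℕ =>
      ‖(t - t₀) ^ k / (Nat.factorial k : ℝ) * (-1 : ℝ) ^ k * hermiteFun (n + k) t₀‖) := by
  set r : ℝ := |t - t₀| + 1 with hrdef
  have hr : 0 < r := by positivity
  set q : ℝ := |t - t₀| / r with hqdef
  have hq0 : 0 ≤ q := by positivity
  have hq1 : q < 1 := by
    rw [hqdef, div_lt_one hr]; simp [hrdef]
  set u : ℕ → ℝ := fun k =>
    (t₀ + r - t₀) ^ k / (Nat.factorial k : ℝ) * (-1 : ℝ) ^ k * hermiteFun (n + k) t₀ with hu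
  have hten : Filter.Tendsto u Filter.atTop (nhds 0) :=
    (hermite_taylor n (t₀ + r) t₀).summable.tendsto_atTop_zero
  have h1 : ∀ᶠ k in Filter.atTop, ‖u k‖ < 1 :=
    NormedAddCommGroup.tendsto_nhds_zero.mp hten 1 one_pos
  have key : ∀ k, ‖(t - t₀) ^ k / (Nat.factorial k : ℝ) * (-1 : ℝ) ^ k *
      hermiteFun (n + k) t₀‖ = q ^ k * ‖u k‖ := by
    intro k
    have hqr : q * r = |t - t₀| := by
      rw [hqdef, div_mul_cancel₀ _ hr.ne']
    simp only [hu, norm_mul, norm_div, norm_pow, norm_neg, norm_one, one_pow, mul_one,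
      add_sub_cancel_left, Real.norm_eq_abs, abs_neg, abs_one]
    rw [abs_of_pos hr, ← hqr, mul_pow]
    ring
  refine Summable.of_norm_bounded_eventually_nat (g := fun k => q ^ k)
    (summable_geometric_of_lt_one hq0 hq1) ?_
  filter_upwards [h1] with k hk
  rw [norm_norm, key k]
  calc q ^ k * ‖u k‖ ≤ q ^ k * 1 := by
        exact mul_le_mul_of_nonneg_left hk.le (by positivity)
    _ = q ^ k := mul_one _

lemma hasSum_pi_prod : ∀ (D : ℕ) (f : Fin D → ℕ → ℝ) (a : Fin D → ℝ),
    (∀ d, HasSum (f d) (a d)) → (∀ d, Summable fun k => ‖f d k‖) →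
    HasSum (fun β : Fin D → ℕ => ∏ d, f d (β d)) (∏ d, a d) ∧
      Summable fun β : Fin D → ℕ => ‖∏ d, f d (β d)‖ := by
  intro D
  induction D with
  | zero =>
    intro f a _ _
    have h1 : HasSum (fun β : Fin 0 → ℕ => ∏ d, f d (β d)) (∏ d, a d) := by
      have := hasSum_unique (fun β : Fin 0 → ℕ => ∏ d, f d (β d))
      simpa using this
    exact ⟨h1, (hasSum_unique _).summable⟩
  | succ D ih =>
    intro f a hH hS
    obtain ⟨ih1, ih2⟩ := ih (fun d => f d.succ) (fun d => a d.succ)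
      (fun d => hH d.succ) (fun d => hS d.succ)
    set e := Fin.consEquiv (fun _ : Fin (D + 1) => ℕ) with he
    have hcomp : ∀ p : ℕ × (Fin D → ℕ),
        ∏ d, f d (e p d) = f 0 p.1 * ∏ d : Fin D, f d.succ (p.2 d) := by
      intro p
      have h0 : e p = Fin.cons p.1 p.2 := rfl
      rw [h0, Fin.prod_univ_succ]
      simp
    have hsummul : Summable fun p : ℕ × (Fin D → ℕ) =>
        f 0 p.1 * ∏ d : Fin D, f d.succ (p.2 d) := by
      apply summable_mul_of_summable_norm (hS 0) ih2
    have hmul : HasSum (fun p : ℕ × (Fin D → ℕ) =>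
        f 0 p.1 * ∏ d : Fin D, f d.succ (p.2 d)) (a 0 * ∏ d : Fin D, a d.succ) :=
      by apply HasSum.mul (hH 0) ih1 hsummul
    have h1 : HasSum (fun β : Fin (D + 1) → ℕ => ∏ d, f d (β d)) (a 0 * ∏ d : Fin D, a d.succ) :=
      e.hasSum_iff.mp (hmul.congr_fun fun p => hcomp p)
    have hn0 : Summable fun k : ℕ => ‖‖f 0 k‖‖ := by simpa using hS 0
    have hn2 : Summable fun γ : Fin D → ℕ => ‖‖∏ d : Fin D, f d.succ (γ d)‖‖ := by
      simpa using ih2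
    have hn : Summable fun p : ℕ × (Fin D → ℕ) =>
        ‖f 0 p.1‖ * ‖∏ d : Fin D, f d.succ (p.2 d)‖ := by
      apply summable_mul_of_summable_norm hn0 hn2
    have h2' : Summable fun p : ℕ × (Fin D → ℕ) => ‖∏ d, f d (e p d)‖ := by
      refine hn.congr fun p => ?_
      rw [hcomp p, norm_mul]
    have h2 : Summable fun β : Fin (D + 1) → ℕ => ‖∏ d, f d (β d)‖ :=
      e.summable_iff.mp h2'
    rw [Fin.prod_univ_succ]
    exact ⟨h1, h2⟩

/-- Everywhere-convergent multivariate Taylor expansion of the Hermite function: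
`h_α(t) = Σ_{β ∈ ℕᴰ} ((t − t₀)^β / β!) (−1)^{|β|} h_{α+β}(t₀)`. -/
theorem hermiteFunMulti_taylor (D : ℕ) (hD : 1 ≤ D) (α : Fin D → ℕ) (t t₀ : Fin D → ℝ) :
    HasSum
      (fun β : Fin D → ℕ =>
        mPow (fun d => t d - t₀ d) β / (mFactorial β : ℝ) * (-1 : ℝ) ^ (mDeg β) *
          hermiteFunMulti (fun d => α d + β d) t₀)
      (hermiteFunMulti α t) := by
  have key := hasSum_pi_prod D
    (fun d k => (t d - t₀ d) ^ k / (Nat.factorial k : ℝ) * (-1 : ℝ) ^ k *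
      hermiteFun (α d + k) (t₀ d))
    (fun d => hermiteFun (α d) (t d))
    (fun d => hermite_taylor (α d) (t d) (t₀ d))
    (fun d => hermite_taylor_summable_norm (α d) (t d) (t₀ d))
  refine key.1.congr_fun fun β => ?_
  simp only [mPow, mFactorial, mDeg, hermiteFunMulti, Nat.cast_prod,
    ← Finset.prod_pow_eq_pow_sum, ← Finset.prod_div_distrib, ← Finset.prod_mul_distrib]
end

section
/- Let D ≥ 1, h > 0, p ≥ 1 an integer, let c_R, c_Q ∈ ℝᴰ, and let M_α ∈ ℝ be given for each multi-index α ∈ ℕᴰ with α[d] < p for all d. Define L_β = ((−1)^{|β|}/β!) Σ_{α[d] < p ∀d} M_α h_{α+β}((c_Q − c_R)/√(2h²)) for each β ∈ ℕᴰ. Then for every q ∈ ℝᴰ, the far-field-to-local translation identity holds: Σ_{α[d] < p ∀d} M_α h_α((q − c_R)/√(2h²)) = Σ_{β ∈ ℕᴰ} L_β ((q − c_Q)/√(2h²))^β, where the multi-index series on the right converges (the family is summable). -/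
open Finset

/-! ### Auxiliary machinery -/

/-- The complex Gaussian `z ↦ e^{-z²}`. -/
noncomputable def gaussC : ℂ → ℂ := fun z => Complex.exp (-z ^ 2)

lemma gaussC_diff : Differentiable ℂ gaussC := ((differentiable_pow 2).neg).cexp

lemma iteratedDeriv_shift (f : ℂ → ℂ) (n : ℕ) :
    ∀ k, iteratedDeriv k (iteratedDeriv n f) = iteratedDeriv (n + k) f := by
  intro k
  induction k with
  | zero => simp
  | succ k ih =>
    rw [iteratedDeriv_succ, ih]
    exact (iteratedDeriv_succ).symm

lemma gaussIter_diff (n : ℕ) : Differentiable ℂ (iteratedDeriv n gaussC) :=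
  (gaussC_diff.contDiff (n := (⊤ : WithTop ℕ∞))).differentiable_iteratedDeriv n (by
    exact_mod_cast lt_top_iff_ne_top.mpr (by simp))

lemma iteratedDeriv_gauss_re (n : ℕ) :
    ∀ t : ℝ, iteratedDeriv n (fun x : ℝ => Real.exp (-x ^ 2)) t
      = (iteratedDeriv n gaussC ↑t).re := by
  induction n with
  | zero =>
    intro t
    simp only [iteratedDeriv_zero, gaussC]
    rw [show (-(t : ℂ) ^ 2) = ((-t ^ 2 : ℝ) : ℂ) by push_cast; ring]
    rw [← Complex.ofReal_exp]
    exact (Complex.ofReal_re _).symm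
  | succ n ih =>
    intro t
    rw [iteratedDeriv_succ, iteratedDeriv_succ]
    have h1 : iteratedDeriv n (fun x : ℝ => Real.exp (-x ^ 2))
        = fun s : ℝ => (iteratedDeriv n gaussC ↑s).re := funext ih
    rw [h1]
    have hG : HasDerivAt (iteratedDeriv n gaussC)
        (iteratedDeriv (n + 1) gaussC ↑t) ↑t := by
      have := ((gaussIter_diff n) ↑t).hasDerivAt
      rwa [show deriv (iteratedDeriv n gaussC) ↑t = iteratedDeriv (n+1) gaussC ↑t by
        rw [iteratedDeriv_succ]] at this
    have h2 : HasDerivAt (fun s : ℝ => iteratedDeriv n gaussC ↑s)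
        (iteratedDeriv (n + 1) gaussC ↑t) t := hG.comp_ofReal
    have h3 : HasDerivAt (fun s : ℝ => (iteratedDeriv n gaussC ↑s).re)
        ((iteratedDeriv (n + 1) gaussC ↑t).re) t :=
      Complex.reCLM.hasFDerivAt.comp_hasDerivAt t h2
    rw [h3.deriv, iteratedDeriv_succ]

lemma hermiteFun_eq (n : ℕ) (t : ℝ) :
    hermiteFun n t = (-1 : ℝ) ^ n * (iteratedDeriv n gaussC ↑t).re := by
  rw [hermiteFun, iteratedDeriv_gauss_re]

lemma oneD_hasSum (n : ℕ) (a y : ℝ) :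
    HasSum (fun k : ℕ => (-1 : ℝ) ^ k / (Nat.factorial k : ℝ) * hermiteFun (n + k) a * y ^ k)
      (hermiteFun n (a + y)) := by
  have H := Complex.hasSum_taylorSeries_of_entire (gaussIter_diff n) ↑a ↑(a + y)
  have Hre' := (Complex.hasSum_re H).mul_left ((-1 : ℝ) ^ n)
  rw [show (-1:ℝ)^n * (iteratedDeriv n gaussC ↑(a+y)).re = hermiteFun n (a+y) from
    (hermiteFun_eq n (a+y)).symm] at Hre'
  have hfun : (fun k : ℕ => (-1 : ℝ) ^ k / (Nat.factorial k : ℝ) * hermiteFun (n + k) a * y ^ k)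
      = fun k : ℕ => (-1 : ℝ) ^ n *
          ((Nat.factorial k : ℂ)⁻¹ • ((↑(a + y) : ℂ) - ↑a) ^ k •
            iteratedDeriv k (iteratedDeriv n gaussC) ↑a).re := by
    funext k
    rw [iteratedDeriv_shift]
    rw [show ((↑(a + y) : ℂ) - ↑a) = ((y : ℝ) : ℂ) by push_cast; ring]
    rw [smul_eq_mul, smul_eq_mul]
    set Z := iteratedDeriv (n + k) gaussC ↑a with hZ
    have h2 : ((Nat.factorial k : ℂ)⁻¹ * (((y : ℝ) : ℂ) ^ k * Z)).re
        = (Nat.factorial k : ℝ)⁻¹ * (y ^ k * Z.re) := by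
      rw [show (Nat.factorial k : ℂ)⁻¹ * (((y : ℝ) : ℂ) ^ k * Z)
          = (((Nat.factorial k : ℝ)⁻¹ * y ^ k : ℝ) : ℂ) * Z by push_cast; ring,
        Complex.re_ofReal_mul]
      ring
    rw [h2, hermiteFun_eq (n + k) a, pow_add]
    have hkk : (-1 : ℝ) ^ k * (-1 : ℝ) ^ k = 1 := by rw [← mul_pow]; norm_num
    linear_combination ((-1 : ℝ) ^ n * Z.re * y ^ k / (Nat.factorial k : ℝ)) * hkk
  rw [hfun]
  exact Hre'

lemma oneD_abs_summable (n : ℕ) (a y : ℝ) :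
    Summable (fun k : ℕ =>
      |(-1 : ℝ) ^ k / (Nat.factorial k : ℝ) * hermiteFun (n + k) a * y ^ k|) := by
  have hp := (gaussIter_diff n).hasFPowerSeriesOnBall (↑a : ℂ) (R := 1) one_pos
  norm_num at hp
  have hrad : (cauchyPowerSeries (iteratedDeriv n gaussC) ↑a 1).radius = ⊤ :=
    top_le_iff.mp hp.r_le
  have hsum := (cauchyPowerSeries (iteratedDeriv n gaussC) ↑a 1).summable_norm_apply
    (x := ((y : ℝ) : ℂ)) (by rw [hrad]; exact EMetric.mem_ball.mpr (edist_lt_top _ _))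
  refine Summable.of_nonneg_of_le (fun k => abs_nonneg _) (fun k => ?_) hsum
  have hfac : (Nat.factorial k : ℂ) ≠ 0 := Nat.cast_ne_zero.mpr (Nat.factorial_ne_zero k)
  have hterm : (cauchyPowerSeries (iteratedDeriv n gaussC) ↑a 1) k (fun _ => ((y : ℝ) : ℂ))
      = (Nat.factorial k : ℂ)⁻¹ • (((y : ℝ) : ℂ) ^ k • iteratedDeriv (n + k) gaussC ↑a) := by
    have h1 := hp.factorial_smul (((y : ℝ) : ℂ)) k
    have h2 : iteratedFDeriv ℂ k (iteratedDeriv n gaussC) ↑a (fun _ => ((y : ℝ) : ℂ))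
        = ((y : ℝ) : ℂ) ^ k • iteratedDeriv (n + k) gaussC ↑a := by
      rw [← iteratedDeriv_shift gaussC n k, iteratedDeriv_eq_iteratedFDeriv]
      calc iteratedFDeriv ℂ k (iteratedDeriv n gaussC) ↑a (fun _ => ((y : ℝ) : ℂ))
          = iteratedFDeriv ℂ k (iteratedDeriv n gaussC) ↑a (fun _ => ((y : ℝ) : ℂ) • 1) := by
            simp
        _ = (∏ _i : Fin k, ((y : ℝ) : ℂ)) •
            iteratedFDeriv ℂ k (iteratedDeriv n gaussC) ↑a (fun _ => 1) :=
            (iteratedFDeriv ℂ k (iteratedDeriv n gaussC) (↑a : ℂ)).map_smul_univ _ _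
        _ = _ := by rw [Finset.prod_const, Finset.card_fin]
    have h3 : (Nat.factorial k : ℂ) •
        ((cauchyPowerSeries (iteratedDeriv n gaussC) ↑a 1) k fun _ => ((y : ℝ) : ℂ))
        = ((y : ℝ) : ℂ) ^ k • iteratedDeriv (n + k) gaussC ↑a := by
      rw [← h2, ← h1, Nat.cast_smul_eq_nsmul]
    have h4 := congrArg (fun z => (Nat.factorial k : ℂ)⁻¹ • z) h3
    simp only [smul_smul] at h4
    rwa [inv_mul_cancel₀ hfac, one_smul, ← smul_smul] at h4
  have hL : |(-1 : ℝ) ^ k / (Nat.factorial k : ℝ) * hermiteFun (n + k) a * y ^ k|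
      = (Nat.factorial k : ℝ)⁻¹ *
        (|y| ^ k * |(iteratedDeriv (n + k) gaussC ↑a).re|) := by
    rw [hermiteFun_eq (n + k) a]
    simp only [abs_mul, abs_div, abs_pow, abs_neg, abs_one, one_pow, Nat.abs_cast]
    ring
  rw [hL, hterm, smul_eq_mul, smul_eq_mul, norm_mul, norm_mul, norm_inv, norm_pow]
  simp only [Complex.norm_natCast, Complex.norm_real, Real.norm_eq_abs]
  apply mul_le_mul_of_nonneg_left ?_ (by positivity)
  apply mul_le_mul_of_nonneg_left ?_ (by positivity)
  exact Complex.abs_re_le_norm _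

lemma pi_hasSum_summable : ∀ (D : ℕ) (f : Fin D → ℕ → ℝ) (S : Fin D → ℝ),
    (∀ d, HasSum (f d) (S d)) → (∀ d, Summable (fun k => |f d k|)) →
    HasSum (fun β : Fin D → ℕ => ∏ d, f d (β d)) (∏ d, S d) ∧
      Summable (fun β : Fin D → ℕ => |∏ d, f d (β d)|) := by
  intro D
  induction D with
  | zero =>
    intro f S _ _
    have h0 : ∀ g : Fin 0 → ℕ, g = (fun i => i.elim0) := fun g => funext fun i => i.elim0
    constructor
    · have := hasSum_single (f := fun β : Fin 0 → ℕ => ∏ d, f d (β d)) (fun i => i.elim0)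
        (fun b' hb' => absurd (h0 b') hb')
      simpa using this
    · exact (hasSum_single (f := fun β : Fin 0 → ℕ => |∏ d, f d (β d)|) (fun i => i.elim0)
        (fun b' hb' => absurd (h0 b') hb')).summable
  | succ D ih =>
    intro f S h1 h2
    obtain ⟨ihH, ihS⟩ := ih (fun d => f d.succ) (fun d => S d.succ)
      (fun d => h1 d.succ) (fun d => h2 d.succ)
    have habs : Summable fun pr : ℕ × (Fin D → ℕ) =>
        |f 0 pr.1| * |∏ d, f d.succ (pr.2 d)| := by
      apply Summable.mul_of_nonneg (h2 0) ihS
      · exact fun k => abs_nonneg _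
      · exact fun γ => abs_nonneg _
    have habs' : Summable fun pr : ℕ × (Fin D → ℕ) =>
        |f 0 pr.1 * ∏ d, f d.succ (pr.2 d)| := by
      refine habs.congr fun pr => ?_
      rw [abs_mul]
    have hprod : Summable fun pr : ℕ × (Fin D → ℕ) =>
        f 0 pr.1 * ∏ d, f d.succ (pr.2 d) := summable_abs_iff.mp habs'
    have hmul := (h1 0).mul ihH hprod
    have hcomp : ∀ pr : ℕ × (Fin D → ℕ),
        (∏ d, f d ((Fin.cons pr.1 pr.2 : Fin (D+1) → ℕ) d)) = f 0 pr.1 * ∏ d, f d.succ (pr.2 d) := by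
      intro pr
      rw [Fin.prod_univ_succ]
      simp
    constructor
    · refine (Equiv.hasSum_iff (Fin.consEquiv fun _ => ℕ)).mp ?_
      have hfe : ((fun β : Fin (D + 1) → ℕ => ∏ d, f d (β d)) ∘ (Fin.consEquiv fun _ => ℕ))
          = fun pr : ℕ × (Fin D → ℕ) => f 0 pr.1 * ∏ d, f d.succ (pr.2 d) := by
        funext pr
        exact hcomp pr
      rw [hfe, Fin.prod_univ_succ]
      exact hmul
    · refine (Equiv.summable_iff (Fin.consEquiv fun _ => ℕ)).mp ?_
      have hfe : ((fun β : Fin (D + 1) → ℕ => |∏ d, f d (β d)|) ∘ (Fin.consEquiv fun _ => ℕ))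
          = fun pr : ℕ × (Fin D → ℕ) => |f 0 pr.1 * ∏ d, f d.succ (pr.2 d)| := by
        funext pr
        simp only [Function.comp_apply]
        rw [show ((Fin.consEquiv fun _ => ℕ) pr : Fin (D+1) → ℕ) = Fin.cons pr.1 pr.2 from rfl,
          hcomp pr]
      rw [hfe]
      exact habs'
/-- Far-field–to–local (F2L) translation operator for the Gaussian kernel:
given far-field coefficients `M_α` (for `α[d] < p`) centered at `c_R`, the
translated local coefficients
`L_β = ((−1)^{|β|}/β!) Σ_{α < p} M_α h_{α+β}((c_Q − c_R)/√(2h²))` satisfy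
`Σ_{α < p} M_α h_α((q − c_R)/√(2h²)) = Σ_{β ∈ ℕᴰ} L_β ((q − c_Q)/√(2h²))^β`,
the right-hand family being summable. -/
theorem farfield_to_local_translation (D : ℕ) (hD : 1 ≤ D) (h : ℝ) (hh : 0 < h)
    (p : ℕ) (hp : 1 ≤ p) (cR cQ : Fin D → ℝ)
    (M : (Fin D → Fin p) → ℝ)
    (L : (Fin D → ℕ) → ℝ)
    (hL : ∀ β : Fin D → ℕ, L β =
      ((-1 : ℝ) ^ (mDeg β) / (mFactorial β : ℝ)) *
        ∑ α : Fin D → Fin p, M α *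
          hermiteFunMulti (fun d => (α d : ℕ) + β d)
            (fun d => (cQ d - cR d) / Real.sqrt (2 * h ^ 2)))
    (q : Fin D → ℝ) :
    HasSum
      (fun β : Fin D → ℕ =>
        L β * mPow (fun d => (q d - cQ d) / Real.sqrt (2 * h ^ 2)) β)
      (∑ α : Fin D → Fin p, M α *
        hermiteFunMulti (fun d => (α d : ℕ))
          (fun d => (q d - cR d) / Real.sqrt (2 * h ^ 2))) := by
  have hxy : ∀ d : Fin D, (cQ d - cR d) / Real.sqrt (2 * h ^ 2)
      + (q d - cQ d) / Real.sqrt (2 * h ^ 2) = (q d - cR d) / Real.sqrt (2 * h ^ 2) := by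
    intro d
    rw [← add_div]
    congr 1
    ring
  have hα : ∀ α : Fin D → Fin p,
      HasSum (fun β : Fin D → ℕ => ∏ d, ((-1 : ℝ) ^ (β d) / (Nat.factorial (β d) : ℝ) *
          hermiteFun ((α d : ℕ) + β d) ((cQ d - cR d) / Real.sqrt (2 * h ^ 2)) *
          ((q d - cQ d) / Real.sqrt (2 * h ^ 2)) ^ (β d)))
        (∏ d, hermiteFun (α d) ((q d - cR d) / Real.sqrt (2 * h ^ 2))) := by
    intro α
    have key := (pi_hasSum_summable D
      (fun d k => (-1 : ℝ) ^ k / (Nat.factorial k : ℝ) *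
        hermiteFun ((α d : ℕ) + k) ((cQ d - cR d) / Real.sqrt (2 * h ^ 2)) *
        ((q d - cQ d) / Real.sqrt (2 * h ^ 2)) ^ k)
      (fun d => hermiteFun (α d) ((cQ d - cR d) / Real.sqrt (2 * h ^ 2)
          + (q d - cQ d) / Real.sqrt (2 * h ^ 2)))
      (fun d => oneD_hasSum _ _ _) (fun d => oneD_abs_summable _ _ _)).1
    have hv : (∏ d, hermiteFun (α d) ((q d - cR d) / Real.sqrt (2 * h ^ 2)))
        = ∏ d, hermiteFun (α d) ((cQ d - cR d) / Real.sqrt (2 * h ^ 2)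
            + (q d - cQ d) / Real.sqrt (2 * h ^ 2)) :=
      Finset.prod_congr rfl fun d _ => by rw [hxy d]
    rw [hv]
    exact key
  have htot : HasSum
      (fun β : Fin D → ℕ => ∑ α : Fin D → Fin p, M α *
        ∏ d, ((-1 : ℝ) ^ (β d) / (Nat.factorial (β d) : ℝ) *
          hermiteFun ((α d : ℕ) + β d) ((cQ d - cR d) / Real.sqrt (2 * h ^ 2)) *
          ((q d - cQ d) / Real.sqrt (2 * h ^ 2)) ^ (β d)))
      (∑ α : Fin D → Fin p, M α *
        ∏ d, hermiteFun (α d) ((q d - cR d) / Real.sqrt (2 * h ^ 2))) :=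
    hasSum_sum fun α _ => (hα α).mul_left (M α)
  have hfun : (fun β : Fin D → ℕ =>
        L β * mPow (fun d => (q d - cQ d) / Real.sqrt (2 * h ^ 2)) β)
      = fun β : Fin D → ℕ => ∑ α : Fin D → Fin p, M α *
        ∏ d, ((-1 : ℝ) ^ (β d) / (Nat.factorial (β d) : ℝ) *
          hermiteFun ((α d : ℕ) + β d) ((cQ d - cR d) / Real.sqrt (2 * h ^ 2)) *
          ((q d - cQ d) / Real.sqrt (2 * h ^ 2)) ^ (β d)) := by
    funext β
    rw [hL β, Finset.mul_sum, Finset.sum_mul]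
    refine Finset.sum_congr rfl fun α _ => ?_
    simp only [hermiteFunMulti, mPow, mDeg, mFactorial]
    rw [Finset.prod_mul_distrib, Finset.prod_mul_distrib, Finset.prod_div_distrib,
      Finset.prod_pow_eq_pow_sum]
    push_cast
    ring
  rw [hfun]
  exact htot
end
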